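/- For every real α ≥ 2, the map F : ℂ → ℂ defined by F(z) = |z|^{α-1} z is differentiable over ℝ at every point (ℂ being viewed as a two-dimensional real normed space), and there exists a constant C ≥ 0 depending only on α such that for all u, v ∈ ℂ: (i) the real Fréchet derivative satisfies ‖D F(u)‖ ≤ C |u|^{α-1} in operator norm, and (ii) ‖D F(u+v) − D F(u)‖ ≤ C (|u|^{α-2} + |v|^{α-2}) |v| in operator norm. -/

import Mathlib

set_option maxHeartbeats 1000000
set_option synthInstance.maxHeartbeats 1000000

open Real ContinuousLinearMap

lemma aux_norm_smul (r : ℝ) (f : ℂ →L[ℝ] ℂ) : ‖r • f‖ = |r| * ‖f‖ :=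
  (norm_smul r f).trans (by rw [Real.norm_eq_abs])

noncomputable def Dmap (α : ℝ) (u : ℂ) : ℂ →L[ℝ] ℂ :=
  ‖u‖ ^ (α - 1) • ContinuousLinearMap.id ℝ ℂ +
    ((α - 1) * ‖u‖ ^ (α - 3)) • (innerSL ℝ u).smulRight u

lemma aux_norm_rpow_hasFDerivAt {u : ℂ} (hu : u ≠ 0) (p : ℝ) :
    HasFDerivAt (fun z : ℂ => ‖z‖ ^ p) ((p * ‖u‖ ^ (p - 2)) • innerSL ℝ u) u := by
  apply HasStrictFDerivAt.hasFDerivAt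
  convert (hasStrictFDerivAt_norm_sq u).rpow_const (p := p / 2) (by simp [hu]) using 0
  simp_rw [← Real.rpow_natCast_mul (norm_nonneg _), ← Nat.cast_smul_eq_nsmul ℝ, smul_smul]
  ring_nf

lemma aux_hasFDerivAt_F {α : ℝ} (hα : 2 ≤ α) (u : ℂ) :
    HasFDerivAt (fun z : ℂ => ‖z‖ ^ (α - 1) • z) (Dmap α u) u := by
  by_cases hu : u = 0
  · subst hu
    have hD0 : Dmap α 0 = 0 := by
      ext h
      simp [Dmap, Real.zero_rpow (by linarith : α - 1 ≠ 0)]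
    rw [hD0]
    rw [hasFDerivAt_iff_isLittleO_nhds_zero]
    rw [Asymptotics.isLittleO_iff]
    intro c hc
    have htend : Filter.Tendsto (fun z : ℂ => ‖z‖ ^ (α - 1)) (nhds 0) (nhds 0) := by
      have : ContinuousAt (fun t : ℝ => t ^ (α - 1)) 0 :=
        Real.continuousAt_rpow_const 0 (α - 1) (Or.inr (by linarith))
      have h2 := this.tendsto.comp (tendsto_norm_zero (E := ℂ))
      simpa [Function.comp_def, Real.zero_rpow (by linarith : α - 1 ≠ 0)] using h2
    filter_upwards [htend.eventually_le_const hc] with z hz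
    simp only [zero_add, norm_zero, ContinuousLinearMap.zero_apply, sub_zero,
      Real.zero_rpow (by linarith : α - 1 ≠ 0), zero_smul]
    rw [norm_smul, Real.norm_eq_abs, abs_of_nonneg (Real.rpow_nonneg (norm_nonneg _) _)]
    exact mul_le_mul_of_nonneg_right hz (norm_nonneg _)
  · have hg1 : HasFDerivAt (fun z : ℂ => ‖z‖ ^ (α - 1))
        (((α - 1) * ‖u‖ ^ (α - 3)) • innerSL ℝ u) u := by
      have := aux_norm_rpow_hasFDerivAt hu (α - 1)
      have h3 : α - 1 - 2 = α - 3 := by ring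
      rwa [h3] at this
    have h := hg1.smul (hasFDerivAt_id u)
    convert h using 1
    · rfl
    · rfl
    · rfl
    ext h'
    simp [Dmap, smul_smul, mul_comm]
    ring

lemma aux_norm_Dmap_le {α : ℝ} (hα : 2 ≤ α) (u : ℂ) :
    ‖Dmap α u‖ ≤ α * ‖u‖ ^ (α - 1) := by
  by_cases hu : u = 0
  · subst hu
    have hD0 : Dmap α 0 = 0 := by
      ext h
      simp [Dmap, Real.zero_rpow (by linarith : α - 1 ≠ 0)]
    rw [hD0, norm_zero]
    positivity
  · have hne : ‖u‖ ≠ 0 := norm_ne_zero_iff.mpr hu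
    have h31 : ‖u‖ ^ (α - 3) * ‖u‖ * ‖u‖ = ‖u‖ ^ (α - 1) := by
      rw [← Real.rpow_add_one hne (α - 3), ← Real.rpow_add_one hne (α - 3 + 1)]
      congr 1
      ring
    calc ‖Dmap α u‖ ≤ ‖(‖u‖ ^ (α - 1) : ℝ) • ContinuousLinearMap.id ℝ ℂ‖ +
          ‖((α - 1) * ‖u‖ ^ (α - 3)) • (innerSL ℝ u).smulRight u‖ := norm_add_le _ _
      _ ≤ ‖u‖ ^ (α - 1) * 1 + ((α - 1) * ‖u‖ ^ (α - 3)) * (‖u‖ * ‖u‖) := by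
          gcongr ?_ + ?_
          · rw [aux_norm_smul, abs_of_nonneg (Real.rpow_nonneg (norm_nonneg _) _)]
            exact mul_le_mul_of_nonneg_left ContinuousLinearMap.norm_id_le (Real.rpow_nonneg (norm_nonneg u) _)
          · rw [aux_norm_smul,
              abs_of_nonneg (mul_nonneg (by linarith) (Real.rpow_nonneg (norm_nonneg u) _)),
              ContinuousLinearMap.norm_smulRight_apply, innerSL_apply_norm]
      _ = α * ‖u‖ ^ (α - 1) := by
          rw [mul_one]
          nlinarith [h31, Real.rpow_nonneg (norm_nonneg u) (α - 1)]

lemma aux_norm_smul1 (r : ℝ) (f : ℂ →L[ℝ] ℝ) : ‖r • f‖ = |r| * ‖f‖ :=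
  (norm_smul r f).trans (by rw [Real.norm_eq_abs])

lemma aux_norm_smul2 (r : ℝ) (T : ℂ →L[ℝ] (ℂ →L[ℝ] ℂ)) : ‖r • T‖ ≤ |r| * ‖T‖ := by
  apply ContinuousLinearMap.opNorm_le_bound _ (by positivity)
  intro h
  rw [ContinuousLinearMap.smul_apply]
  calc ‖r • T h‖ = |r| * ‖T h‖ := aux_norm_smul r (T h)
    _ ≤ |r| * (‖T‖ * ‖h‖) :=
        mul_le_mul_of_nonneg_left (T.le_opNorm h) (abs_nonneg r)
    _ = |r| * ‖T‖ * ‖h‖ := by ring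

lemma aux_norm_add_le2 (f g : ℂ →L[ℝ] (ℂ →L[ℝ] ℂ)) : ‖f + g‖ ≤ ‖f‖ + ‖g‖ :=
  norm_add_le f g

noncomputable def Tdiag : ℂ →L[ℝ] ((ℂ →L[ℝ] ℝ) × ℂ) :=
  (innerSL ℝ (E := ℂ)).prod (ContinuousLinearMap.id ℝ ℂ)

noncomputable def bilSR : IsBoundedBilinearMap ℝ
    (fun p : (ℂ →L[ℝ] ℝ) × ℂ => p.1.smulRight p.2) := isBoundedBilinearMap_smulRight

noncomputable def D2 (α : ℝ) (u : ℂ) : ℂ →L[ℝ] (ℂ →L[ℝ] ℂ) :=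
  ((((α - 1) * ‖u‖ ^ (α - 3)) • innerSL ℝ u).smulRight (ContinuousLinearMap.id ℝ ℂ)) +
  (((α - 1) * ‖u‖ ^ (α - 3)) • ((bilSR.deriv (innerSL ℝ u, u)).comp Tdiag) +
    ((α - 1) • (((α - 3) * ‖u‖ ^ (α - 5)) • innerSL ℝ u)).smulRight ((innerSL ℝ u).smulRight u))

lemma aux_hasFDerivAt_Dmap {α : ℝ} {u : ℂ} (hu : u ≠ 0) :
    HasFDerivAt (Dmap α) (D2 α u) u := by
  have hg1 : HasFDerivAt (fun z : ℂ => ‖z‖ ^ (α - 1))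
      (((α - 1) * ‖u‖ ^ (α - 3)) • innerSL ℝ u) u := by
    have := aux_norm_rpow_hasFDerivAt hu (α - 1)
    have h3 : α - 1 - 2 = α - 3 := by ring
    rwa [h3] at this
  have hg2 : HasFDerivAt (fun z : ℂ => ‖z‖ ^ (α - 3))
      (((α - 3) * ‖u‖ ^ (α - 5)) • innerSL ℝ u) u := by
    have := aux_norm_rpow_hasFDerivAt hu (α - 3)
    have h3 : α - 3 - 2 = α - 5 := by ring
    rwa [h3] at this
  have hT : HasFDerivAt (fun w : ℂ => ((innerSL ℝ w, w) : (ℂ →L[ℝ] ℝ) × ℂ)) Tdiag u :=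
    Tdiag.hasFDerivAt
  have hB0 : HasFDerivAt ((fun p : (ℂ →L[ℝ] ℝ) × ℂ => p.1.smulRight p.2) ∘
        (fun w : ℂ => ((innerSL ℝ w, w) : (ℂ →L[ℝ] ℝ) × ℂ)))
      ((bilSR.deriv (innerSL ℝ u, u)).comp Tdiag) u :=
    HasFDerivAt.comp (f := fun w : ℂ => ((innerSL ℝ w, w) : (ℂ →L[ℝ] ℝ) × ℂ))
      u (bilSR.hasFDerivAt (innerSL ℝ u, u)) hT
  have hB : HasFDerivAt (fun w : ℂ => (innerSL ℝ w).smulRight w)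
      ((bilSR.deriv (innerSL ℝ u, u)).comp Tdiag) u := hB0
  have hc : HasFDerivAt (fun z : ℂ => (α - 1) * ‖z‖ ^ (α - 3))
      ((α - 1) • (((α - 3) * ‖u‖ ^ (α - 5)) • innerSL ℝ u)) u := hg2.const_mul (α - 1)
  have h1 : HasFDerivAt (fun z : ℂ => ‖z‖ ^ (α - 1) • ContinuousLinearMap.id ℝ ℂ)
      ((((α - 1) * ‖u‖ ^ (α - 3)) • innerSL ℝ u).smulRight (ContinuousLinearMap.id ℝ ℂ)) u :=
    hg1.smul_const (ContinuousLinearMap.id ℝ ℂ)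
  have h2 := hc.smul hB
  exact h1.add h2

lemma aux_norm_D2_le {α : ℝ} (hα : 2 ≤ α) {u : ℂ} (hu : u ≠ 0) :
    ‖D2 α u‖ ≤ ((α - 1) * (3 + |α - 3|)) * ‖u‖ ^ (α - 2) := by
  have hne : ‖u‖ ≠ 0 := norm_ne_zero_iff.mpr hu
  have e32 : ‖u‖ ^ (α - 3) * ‖u‖ = ‖u‖ ^ (α - 2) := by
    rw [← Real.rpow_add_one hne (α - 3)]; congr 1; ring
  have e52 : ‖u‖ ^ (α - 5) * ‖u‖ * ‖u‖ * ‖u‖ = ‖u‖ ^ (α - 2) := by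
    rw [← Real.rpow_add_one hne (α - 5), ← Real.rpow_add_one hne (α - 5 + 1),
      ← Real.rpow_add_one hne (α - 5 + 1 + 1)]
    congr 1; ring
  have hBd : ‖(bilSR.deriv (innerSL ℝ u, u)).comp Tdiag‖ ≤ 2 * ‖u‖ := by
    apply ContinuousLinearMap.opNorm_le_bound _ (by positivity)
    intro h
    have happ : ((bilSR.deriv (innerSL ℝ u, u)).comp Tdiag) h
        = (innerSL ℝ u).smulRight h + (innerSL ℝ h).smulRight u := by
      have := bilSR.deriv_apply (innerSL ℝ u, u) (innerSL ℝ h, h)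
      simpa [Tdiag] using this
    rw [happ]
    calc ‖(innerSL ℝ u).smulRight h + (innerSL ℝ h).smulRight u‖
        ≤ ‖(innerSL ℝ u).smulRight h‖ + ‖(innerSL ℝ h).smulRight u‖ := norm_add_le _ _
      _ = ‖u‖ * ‖h‖ + ‖h‖ * ‖u‖ := by
          rw [ContinuousLinearMap.norm_smulRight_apply, ContinuousLinearMap.norm_smulRight_apply,
            innerSL_apply_norm, innerSL_apply_norm]
      _ = 2 * ‖u‖ * ‖h‖ := by ring
  have hnn3 : (0:ℝ) ≤ ‖u‖ ^ (α - 3) := Real.rpow_nonneg (norm_nonneg u) _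
  have hnn5 : (0:ℝ) ≤ ‖u‖ ^ (α - 5) := Real.rpow_nonneg (norm_nonneg u) _
  have hα1 : (0:ℝ) ≤ α - 1 := by linarith
  calc ‖D2 α u‖
      = ‖(((α - 1) * ‖u‖ ^ (α - 3)) • innerSL ℝ u).smulRight (ContinuousLinearMap.id ℝ ℂ) +
        (((α - 1) * ‖u‖ ^ (α - 3)) • ((bilSR.deriv (innerSL ℝ u, u)).comp Tdiag) +
         ((α - 1) • (((α - 3) * ‖u‖ ^ (α - 5)) • innerSL ℝ u)).smulRight
            ((innerSL ℝ u).smulRight u))‖ := rfl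
    _ ≤ ‖(((α - 1) * ‖u‖ ^ (α - 3)) • innerSL ℝ u).smulRight (ContinuousLinearMap.id ℝ ℂ)‖ +
        (‖((α - 1) * ‖u‖ ^ (α - 3)) • ((bilSR.deriv (innerSL ℝ u, u)).comp Tdiag)‖ +
         ‖((α - 1) • (((α - 3) * ‖u‖ ^ (α - 5)) • innerSL ℝ u)).smulRight
            ((innerSL ℝ u).smulRight u)‖) := by
        refine le_trans (aux_norm_add_le2 _ _) ?_
        gcongr
        exact aux_norm_add_le2 _ _
    _ ≤ ((α - 1) * ‖u‖ ^ (α - 3) * ‖u‖) * 1 +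
        (((α - 1) * ‖u‖ ^ (α - 3)) * (2 * ‖u‖) +
         ((α - 1) * (|α - 3| * ‖u‖ ^ (α - 5) * ‖u‖)) * (‖u‖ * ‖u‖)) := by
        gcongr ?_ + (?_ + ?_)
        · rw [ContinuousLinearMap.norm_smulRight_apply, aux_norm_smul1,
            abs_of_nonneg (mul_nonneg hα1 hnn3), innerSL_apply_norm]
          exact mul_le_mul_of_nonneg_left ContinuousLinearMap.norm_id_le
            (mul_nonneg (mul_nonneg hα1 hnn3) (norm_nonneg u))
        · refine le_trans (aux_norm_smul2 _ _) ?_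
          rw [abs_of_nonneg (mul_nonneg hα1 hnn3)]
          exact mul_le_mul_of_nonneg_left hBd (mul_nonneg hα1 hnn3)
        · simp only [ContinuousLinearMap.norm_smulRight_apply, aux_norm_smul1,
            innerSL_apply_norm, abs_mul, abs_of_nonneg hα1, abs_of_nonneg hnn5]
          apply le_of_eq
          ring
    _ = ((α - 1) * (3 + |α - 3|)) * ‖u‖ ^ (α - 2) := by
        rw [mul_one]
        linear_combination (3 * (α - 1)) * e32 + ((α - 1) * |α - 3|) * e52

lemma aux_lip {α : ℝ} (hα : 2 ≤ α) {u v : ℂ} (hu : u ≠ 0) (hv : ‖v‖ ≤ ‖u‖ / 2) :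
    ‖Dmap α (u + v) - Dmap α u‖ ≤
      ((α - 1) * (3 + |α - 3|) * (3 / 2) ^ (α - 2)) * ‖u‖ ^ (α - 2) * ‖v‖ := by
  have hupos : 0 < ‖u‖ := norm_pos_iff.mpr hu
  set s : Set ℂ := Metric.closedBall u (‖u‖ / 2) with hs
  have hconv : Convex ℝ s := convex_closedBall u (‖u‖ / 2)
  have hmem : ∀ x ∈ s, x ≠ 0 ∧ ‖x‖ ≤ 3 / 2 * ‖u‖ := by
    intro x hx
    rw [hs, Metric.mem_closedBall, dist_eq_norm] at hx
    have hxu : ‖x - u‖ ≤ ‖u‖ / 2 := hx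
    have hlow : ‖u‖ / 2 ≤ ‖x‖ := by
      have h1 : ‖u‖ - ‖x‖ ≤ ‖x - u‖ := by
        have := norm_sub_norm_le u x
        calc ‖u‖ - ‖x‖ ≤ ‖u - x‖ := this
          _ = ‖x - u‖ := norm_sub_rev u x
      linarith
    constructor
    · intro h0
      rw [h0, norm_zero] at hlow
      linarith
    · calc ‖x‖ = ‖x - u + u‖ := by rw [show x - u + u = x from by ring]
        _ ≤ ‖x - u‖ + ‖u‖ := norm_add_le _ _
        _ ≤ 3 / 2 * ‖u‖ := by linarith
  have hK : (0:ℝ) ≤ (α - 1) * (3 + |α - 3|) :=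
    mul_nonneg (by linarith) (by positivity)
  have bound : ∀ x ∈ s, ‖D2 α x‖ ≤ ((α - 1) * (3 + |α - 3|)) * (3 / 2 * ‖u‖) ^ (α - 2) := by
    intro x hx
    obtain ⟨hx0, hxle⟩ := hmem x hx
    refine le_trans (aux_norm_D2_le hα hx0) ?_
    exact mul_le_mul_of_nonneg_left
      (Real.rpow_le_rpow (norm_nonneg x) hxle (by linarith)) hK
  have hder : ∀ x ∈ s, HasFDerivWithinAt (Dmap α) (D2 α x) s x := fun x hx =>
    (aux_hasFDerivAt_Dmap (hmem x hx).1).hasFDerivWithinAt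
  have hus : u ∈ s := Metric.mem_closedBall_self (by linarith)
  have huvs : u + v ∈ s := by
    rw [hs, Metric.mem_closedBall, dist_eq_norm]
    simpa using hv
  have h := hconv.norm_image_sub_le_of_norm_hasFDerivWithin_le hder bound hus huvs
  simp only [add_sub_cancel_left] at h
  calc ‖Dmap α (u + v) - Dmap α u‖
      ≤ ((α - 1) * (3 + |α - 3|)) * (3 / 2 * ‖u‖) ^ (α - 2) * ‖v‖ := h
    _ = ((α - 1) * (3 + |α - 3|) * (3 / 2) ^ (α - 2)) * ‖u‖ ^ (α - 2) * ‖v‖ := by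
        rw [Real.mul_rpow (by norm_num) (norm_nonneg u)]
        ring


/-- For real `α ≥ 2`, the map `F : ℂ → ℂ`, `F z = |z|^{α-1} z`, is differentiable over `ℝ`,
and there is `C ≥ 0` (depending only on `α`) such that `‖DF(u)‖ ≤ C|u|^{α-1}` and
`‖DF(u+v) − DF(u)‖ ≤ C(|u|^{α-2} + |v|^{α-2})|v|` in operator norm. -/
theorem stmt_1 (α : ℝ) (hα : 2 ≤ α) :
    Differentiable ℝ (fun z : ℂ => (‖z‖ ^ (α - 1) : ℝ) • z) ∧
    ∃ C : ℝ, 0 ≤ C ∧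
      (∀ u : ℂ, ‖fderiv ℝ (fun z : ℂ => (‖z‖ ^ (α - 1) : ℝ) • z) u‖
          ≤ C * ‖u‖ ^ (α - 1)) ∧
      (∀ u v : ℂ,
        ‖fderiv ℝ (fun z : ℂ => (‖z‖ ^ (α - 1) : ℝ) • z) (u + v)
            - fderiv ℝ (fun z : ℂ => (‖z‖ ^ (α - 1) : ℝ) • z) u‖
          ≤ C * (‖u‖ ^ (α - 2) + ‖v‖ ^ (α - 2)) * ‖v‖) := by
  have hfun : (fun z : ℂ => (‖z‖ ^ (α - 1) : ℝ) • z)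
      = fun z : ℂ => ‖z‖ ^ (α - 1) • z := by
    rfl
  rw [hfun]
  have hder : ∀ u : ℂ, fderiv ℝ (fun z : ℂ => ‖z‖ ^ (α - 1) • z) u = Dmap α u :=
    fun u => (aux_hasFDerivAt_F hα u).fderiv
  set C : ℝ := α + 2 * α * 3 ^ (α - 1) + (α - 1) * (3 + |α - 3|) * (3 / 2) ^ (α - 2) with hC
  have hK1 : (0:ℝ) ≤ 2 * α * 3 ^ (α - 1) :=
    mul_nonneg (mul_nonneg (by norm_num) (by linarith)) (Real.rpow_nonneg (by norm_num) _)
  have hK2 : (0:ℝ) ≤ (α - 1) * (3 + |α - 3|) * (3 / 2) ^ (α - 2) :=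
    mul_nonneg (mul_nonneg (by linarith) (by positivity)) (Real.rpow_nonneg (by norm_num) _)
  have hC0 : (0:ℝ) ≤ C := by rw [hC]; linarith
  refine ⟨fun u => (aux_hasFDerivAt_F hα u).differentiableAt, C, hC0, ?_, ?_⟩
  · intro u
    rw [hder u]
    refine le_trans (aux_norm_Dmap_le hα u) ?_
    exact mul_le_mul_of_nonneg_right (by rw [hC]; linarith)
      (Real.rpow_nonneg (norm_nonneg u) _)
  · intro u v
    rw [hder, hder]
    have hnnu : (0:ℝ) ≤ ‖u‖ ^ (α - 2) := Real.rpow_nonneg (norm_nonneg u) _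
    have hnnv : (0:ℝ) ≤ ‖v‖ ^ (α - 2) := Real.rpow_nonneg (norm_nonneg v) _
    by_cases hv0 : v = 0
    · subst hv0
      simp
    · have hvpos : 0 < ‖v‖ := norm_pos_iff.mpr hv0
      have hv' : ‖v‖ ^ (α - 2) * ‖v‖ = ‖v‖ ^ (α - 1) := by
        rw [← Real.rpow_add_one (ne_of_gt hvpos) (α - 2)]; congr 1; ring
      rcases le_or_gt ‖u‖ (2 * ‖v‖) with hcase | hcase
      · -- case A
        have h1 : ‖u + v‖ ^ (α - 1) ≤ (3 * ‖v‖) ^ (α - 1) :=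
          Real.rpow_le_rpow (norm_nonneg _)
            (le_trans (norm_add_le u v) (by linarith)) (by linarith)
        have h2 : ‖u‖ ^ (α - 1) ≤ (3 * ‖v‖) ^ (α - 1) :=
          Real.rpow_le_rpow (norm_nonneg _) (by linarith) (by linarith)
        have h3 : (3 * ‖v‖) ^ (α - 1) = 3 ^ (α - 1) * (‖v‖ ^ (α - 2) * ‖v‖) := by
          rw [Real.mul_rpow (by norm_num) (norm_nonneg v), hv']
        calc ‖Dmap α (u + v) - Dmap α u‖
            ≤ ‖Dmap α (u + v)‖ + ‖Dmap α u‖ := norm_sub_le _ _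
          _ ≤ α * (3 * ‖v‖) ^ (α - 1) + α * (3 * ‖v‖) ^ (α - 1) :=
              add_le_add
                (le_trans (aux_norm_Dmap_le hα (u + v))
                  (mul_le_mul_of_nonneg_left h1 (by linarith)))
                (le_trans (aux_norm_Dmap_le hα u)
                  (mul_le_mul_of_nonneg_left h2 (by linarith)))
          _ = (2 * α * 3 ^ (α - 1)) * (‖v‖ ^ (α - 2) * ‖v‖) := by rw [h3]; ring
          _ ≤ C * ((‖u‖ ^ (α - 2) + ‖v‖ ^ (α - 2)) * ‖v‖) := by
              apply mul_le_mul (by rw [hC]; linarith)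
                (mul_le_mul_of_nonneg_right (by linarith) (norm_nonneg v))
                (mul_nonneg hnnv (norm_nonneg v)) hC0
          _ = C * (‖u‖ ^ (α - 2) + ‖v‖ ^ (α - 2)) * ‖v‖ := by ring
      · -- case B
        have hu0 : u ≠ 0 := by
          intro h0
          rw [h0, norm_zero] at hcase
          nlinarith [norm_nonneg v]
        have hv2 : ‖v‖ ≤ ‖u‖ / 2 := by linarith
        refine le_trans (aux_lip hα hu0 hv2) ?_
        calc ((α - 1) * (3 + |α - 3|) * (3 / 2) ^ (α - 2)) * ‖u‖ ^ (α - 2) * ‖v‖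
            = ((α - 1) * (3 + |α - 3|) * (3 / 2) ^ (α - 2)) * (‖u‖ ^ (α - 2) * ‖v‖) := by ring
          _ ≤ C * ((‖u‖ ^ (α - 2) + ‖v‖ ^ (α - 2)) * ‖v‖) := by
              apply mul_le_mul (by rw [hC]; linarith)
                (mul_le_mul_of_nonneg_right (by linarith) (norm_nonneg v))
                (mul_nonneg hnnu (norm_nonneg v)) hC0
          _ = C * (‖u‖ ^ (α - 2) + ‖v‖ ^ (α - 2)) * ‖v‖ := by ring
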